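/- Let A ∈ ℝ^{D×d} satisfy AᵀA = I_d, and write x_∥ = AAᵀx and x_⊥ = (I_D − AAᵀ)x. Let g* : ℝ^D → ℝ and h* : ℝ → ℝ with h*(r) ≤ 0 for all r and h*(0) = 0, and set f*(x) = g*(x_∥) + h*(‖x_⊥‖₂). Let f̂ : ℝ^D → ℝ. Let P_a and P be probability measures on ℝ^D such that P_a is supported on the column span of A (i.e. (I_D − AAᵀ)x = 0 for P_a-almost every x), ∫ f̂ dP_a = a, and all the integrals below are finite. Then a − ∫ f*(x) dP(x) ≤ ∫ |f̂(x) − g*(x)| dP_a(x) + |∫ g*(x_∥) dP_a(x) − ∫ g*(x_∥) dP(x)| + ∫ (−h*(‖x_⊥‖₂)) dP(x). -/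

import Mathlib

open Matrix MeasureTheory

/-- Reinterpret a plain vector as an element of Euclidean space (definitionally
equal; this fixes the ℓ² norm). -/
noncomputable def toE {k : ℕ} (v : Fin k → ℝ) : EuclideanSpace ℝ (Fin k) := WithLp.toLp 2 v

/-- The on-support projection `x_∥ = AAᵀx`. -/
noncomputable def projPar {D d : ℕ} (A : Matrix (Fin D) (Fin d) ℝ)
    (x : EuclideanSpace ℝ (Fin D)) : EuclideanSpace ℝ (Fin D) :=
  toE (A.mulVec (Aᵀ.mulVec x))

/-- **Suboptimality decomposition (Proposition 2).** With `f*(x) = g*(x_∥) +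
h*(‖x_⊥‖₂)`, `h* ≤ 0`, `h*(0) = 0`, target conditional distribution `P_a`
supported on the column span of `A` with `∫ f̂ dP_a = a`, and generated
distribution `P`:
`a − ∫ f* dP ≤ ∫|f̂ − g*| dP_a + |∫ g*(x_∥) dP_a − ∫ g*(x_∥) dP| + ∫ (−h*(‖x_⊥‖₂)) dP`. -/
theorem suboptimality_decomposition (D d : ℕ)
    (A : Matrix (Fin D) (Fin d) ℝ) (hA : Aᵀ * A = 1)
    (gstar : EuclideanSpace ℝ (Fin D) → ℝ) (hstar : ℝ → ℝ)
    (hstar_nonpos : ∀ r, hstar r ≤ 0) (hstar_zero : hstar 0 = 0)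
    (fhat : EuclideanSpace ℝ (Fin D) → ℝ)
    (Pa P : Measure (EuclideanSpace ℝ (Fin D)))
    [IsProbabilityMeasure Pa] [IsProbabilityMeasure P]
    (a : ℝ)
    (hsupp : ∀ᵐ x ∂Pa, x - projPar A x = 0)
    (hfa : (∫ x, fhat x ∂Pa) = a)
    (hint_fhat : Integrable fhat Pa)
    (hint_g_Pa : Integrable gstar Pa)
    (hint_gpar_Pa : Integrable (fun x => gstar (projPar A x)) Pa)
    (hint_absdiff : Integrable (fun x => |fhat x - gstar x|) Pa)
    (hint_gpar_P : Integrable (fun x => gstar (projPar A x)) P)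
    (hint_h_P : Integrable (fun x => hstar ‖x - projPar A x‖) P) :
    a - (∫ x, (gstar (projPar A x) + hstar ‖x - projPar A x‖) ∂P)
      ≤ (∫ x, |fhat x - gstar x| ∂Pa)
        + |(∫ x, gstar (projPar A x) ∂Pa) - ∫ x, gstar (projPar A x) ∂P|
        + ∫ x, (-hstar ‖x - projPar A x‖) ∂P := by
  have hgeq : (∫ x, gstar (projPar A x) ∂Pa) = ∫ x, gstar x ∂Pa := by
    refine integral_congr_ae (hsupp.mono fun x hx => ?_)
    have : x = projPar A x := by rwa [sub_eq_zero] at hx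
    exact congrArg gstar this.symm
  have hsum : (∫ x, (gstar (projPar A x) + hstar ‖x - projPar A x‖) ∂P)
      = (∫ x, gstar (projPar A x) ∂P) + ∫ x, hstar ‖x - projPar A x‖ ∂P :=
    integral_add hint_gpar_P hint_h_P
  have hneg : (∫ x, (-hstar ‖x - projPar A x‖) ∂P)
      = - ∫ x, hstar ‖x - projPar A x‖ ∂P := integral_neg _
  have h1 : a - ∫ x, gstar x ∂Pa ≤ ∫ x, |fhat x - gstar x| ∂Pa := by
    rw [← hfa, ← integral_sub hint_fhat hint_g_Pa]
    exact integral_mono (hint_fhat.sub hint_g_Pa) hint_absdiff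
      (fun x => le_abs_self _)
  have h2 : (∫ x, gstar (projPar A x) ∂Pa) - ∫ x, gstar (projPar A x) ∂P
      ≤ |(∫ x, gstar (projPar A x) ∂Pa) - ∫ x, gstar (projPar A x) ∂P| :=
    le_abs_self _
  rw [hsum, hneg]
  rw [← hgeq] at h1
  linarith
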